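/- Let M be a finite regular monoid and k a field, and let A := MonoidAlgebra k M. Let S_1, ..., S_n be the J-classes of M, enumerated so that M·s·M ⊆ M·t·M for s ∈ S_i, t ∈ S_j implies i ≤ j; set J_0 := 0 and J_i := the k-linear span of S_1 ∪ ... ∪ S_i. Fix i ∈ {1, ..., n} and let ε be a set of idempotents of M, all lying in S_i, such that the sets (Me) ∩ S_i for e ∈ ε are pairwise disjoint with union S_i. Then there is an isomorphism of left A-modules J_i/J_{i-1} ≅ ⊕_{e ∈ ε} (A·e)/(A·kJ_e), where kJ_e is the k-linear span in A of J_e := eMe ∖ Γ_e and A·kJ_e = { finite sums of elements a·x with a ∈ A, x ∈ kJ_e }. -/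

import Mathlib

open DirectSum

set_option maxHeartbeats 1000000
set_option synthInstance.maxHeartbeats 400000

/-- The set `MsM = { a·s·b : a, b ∈ M }` for an element `s` of a monoid `M`. -/
def MsM {M : Type*} [Monoid M] (s : M) : Set M := { x : M | ∃ a b : M, x = a * s * b }

/-- The `J`-class of an element `s` of a monoid `M`. -/
def JClass {M : Type*} [Monoid M] (s : M) : Set M := { x : M | MsM x = MsM s }

/-- The set `Me = { a·e : a ∈ M }`. -/
def Me {M : Type*} [Monoid M] (e : M) : Set M := { x : M | ∃ a : M, x = a * e }

/-- The submonoid `eMe = { e·a·e : a ∈ M }` of a monoid `M`, for an idempotent `e`. -/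
def eMe {M : Type*} [Monoid M] (e : M) : Set M := { a : M | ∃ c : M, a = e * c * e }

/-- The group `Γ_e` of invertible elements of the monoid `eMe` (identity element `e`). -/
def unitSet {M : Type*} [Monoid M] (e : M) : Set M :=
  { a : M | a ∈ eMe e ∧ ∃ b ∈ eMe e, a * b = e ∧ b * a = e }

/-- The set `J_e := eMe ∖ Γ_e`. -/
def Je {M : Type*} [Monoid M] (e : M) : Set M := eMe e \ unitSet e

section MonoidLemmas
variable {M : Type*} [Monoid M] {e : M}

lemma e_mem_eMe (he : e * e = e) : e ∈ eMe e := ⟨e, by rw [he, he]⟩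

lemma eMe_mul_left (he : e * e = e) {x : M} (hx : x ∈ eMe e) : e * x = x := by
  obtain ⟨c, rfl⟩ := hx
  rw [← mul_assoc, ← mul_assoc, he]

lemma eMe_mul_right (he : e * e = e) {x : M} (hx : x ∈ eMe e) : x * e = x := by
  obtain ⟨c, rfl⟩ := hx
  rw [mul_assoc, he]

lemma mul_mem_eMe (he : e * e = e) {x y : M} (hx : x ∈ eMe e) (hy : y ∈ eMe e) :
    x * y ∈ eMe e := by
  obtain ⟨c, rfl⟩ := hx
  obtain ⟨d, rfl⟩ := hy
  exact ⟨c * e * e * d, by simp [mul_assoc]⟩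

/-- In a finite monoid, inside the corner `eMe`, a right inverse is a left inverse. -/
lemma eMe_inv_comm [Finite M] (he : e * e = e) {p q : M} (hp : p ∈ eMe e)
    (hq : q ∈ eMe e) (hpq : p * q = e) : q * p = e := by
  haveI : Finite (eMe e) := Subtype.finite
  set F : eMe e → eMe e := fun x => ⟨p * x.1, mul_mem_eMe he hp x.2⟩ with hF
  have hsurj : Function.Surjective F := by
    intro y
    refine ⟨⟨q * y.1, mul_mem_eMe he hq y.2⟩, ?_⟩
    ext
    show p * (q * y.1) = y.1
    rw [← mul_assoc, hpq, eMe_mul_left he y.2]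
  have hinj : Function.Injective F := Finite.injective_iff_surjective.mpr hsurj
  have h1 : F ⟨q * p, mul_mem_eMe he hq hp⟩ = F ⟨e, e_mem_eMe he⟩ := by
    ext
    show p * (q * p) = p * e
    rw [← mul_assoc, hpq, eMe_mul_left he hp, eMe_mul_right he hp]
  have := hinj h1
  exact congrArg Subtype.val this

/-- Key fact: if `x ∈ eMe` and `e ∈ MxM`, then `x` is a unit of `eMe`. -/
lemma mem_unitSet_of_mem_MsM [Finite M] (he : e * e = e) {x : M} (hx : x ∈ eMe e)
    (hex : e ∈ MsM x) : x ∈ unitSet e := by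
  obtain ⟨a, b, hab⟩ := hex
  have hee : ∀ z : M, e * (e * z) = e * z := fun z => by rw [← mul_assoc, he]
  have key : (e * a * e) * (x * (e * b * e)) = e := by
    obtain ⟨c, rfl⟩ := hx
    have h1 : e * a * e * (e * c * e * (e * b * e)) = e * (a * (e * c * e) * b) * e := by
      simp [mul_assoc, hee]
    rw [h1, ← hab, he, he]
  have hp : e * a * e ∈ eMe e := ⟨a, rfl⟩
  have hq : x * (e * b * e) ∈ eMe e := mul_mem_eMe he hx ⟨b, rfl⟩
  have h2 : (x * (e * b * e)) * (e * a * e) = e := eMe_inv_comm he hp hq key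
  have h3 : x * ((e * b * e) * (e * a * e)) = e := by rw [← mul_assoc]; exact h2
  have hu : (e * b * e) * (e * a * e) ∈ eMe e := mul_mem_eMe he ⟨b, rfl⟩ ⟨a, rfl⟩
  exact ⟨hx, _, hu, h3, eMe_inv_comm he hx hu h3⟩

end MonoidLemmas

section Defs
variable (k : Type*) [Field k] {M : Type*} [Monoid M]

noncomputable abbrev NeS (e : M) : Submodule (MonoidAlgebra k M) (MonoidAlgebra k M) :=
  Submodule.span (MonoidAlgebra k M) {MonoidAlgebra.of k M e}

noncomputable abbrev KeS (e : M) : Submodule (MonoidAlgebra k M) ↥(NeS k e) :=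
  Submodule.comap (NeS k e).subtype
    (Submodule.span (MonoidAlgebra k M) (⇑(MonoidAlgebra.of k M) '' Je e))

abbrev QfT (e : M) := ↥(NeS k e) ⧸ KeS k e

noncomputable instance QfT.instAddCommGroup (e : M) : AddCommGroup (QfT k e) :=
  Submodule.Quotient.addCommGroup _

end Defs

theorem mainEquiv {M : Type*} [Monoid M] [Finite M]
    (hreg : ∀ s : M, ∃ t : M, s * t * s = s)
    {k : Type*} [Field k]
    {n : ℕ} {S : Fin n → Set M}
    (hclass : ∀ i, ∃ s : M, S i = JClass s)
    (hcover : ∀ s : M, ∃ i, s ∈ S i)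
    (hdisj : ∀ i j, i ≠ j → Disjoint (S i) (S j))
    (horder : ∀ (i j : Fin n) (s t : M), s ∈ S i → t ∈ S j → MsM s ⊆ MsM t → i ≤ j)
    (i : Fin n) (ε : Set M)
    (hε : ∀ e ∈ ε, e * e = e ∧ e ∈ S i)
    (hdisjε : ε.PairwiseDisjoint fun e => Me e ∩ S i)
    (hunion : (⋃ e ∈ ε, Me e ∩ S i) = S i)
    (JiA Jim1A : Submodule (MonoidAlgebra k M) (MonoidAlgebra k M))
    (hJi : ∀ x, x ∈ JiA ↔
      x ∈ Submodule.span k (⇑(MonoidAlgebra.of k M) '' ⋃ (j : Fin n) (_ : j ≤ i), S j))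
    (hJim1 : ∀ x, x ∈ Jim1A ↔
      x ∈ Submodule.span k (⇑(MonoidAlgebra.of k M) '' ⋃ (j : Fin n) (_ : j < i), S j)) :
    Nonempty
        ((↥JiA ⧸ Submodule.comap JiA.subtype Jim1A) ≃ₗ[MonoidAlgebra k M]
          (⨁ e : ↥ε,
            ↥(Submodule.span (MonoidAlgebra k M) {MonoidAlgebra.of k M e.val}) ⧸
              Submodule.comap
                (Submodule.span (MonoidAlgebra k M) {MonoidAlgebra.of k M e.val}).subtype
                (Submodule.span (MonoidAlgebra k M)
                  (⇑(MonoidAlgebra.of k M) '' Je e.val)))) := by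
  classical
  have hMsM_self : ∀ s : M, s ∈ MsM s := fun s => ⟨1, 1, by simp⟩
  have htrans : ∀ {x s : M}, x ∈ MsM s → MsM x ⊆ MsM s := by
    rintro x s ⟨a, b, rfl⟩ y ⟨c, d, rfl⟩
    exact ⟨c * a, b * d, by simp [mul_assoc]⟩
  have hclassu : ∀ {s : M} {j j' : Fin n}, s ∈ S j → s ∈ S j' → j = j' := by
    intro s j j' hj hj'
    by_contra hne
    exact Set.disjoint_left.mp (hdisj j j' hne) hj hj'
  -- every element of `Je e` lies in a strictly lower class
  have hJelow : ∀ (e : ↥ε), ∀ y ∈ Je e.val, ∃ j, j < i ∧ y ∈ S j := by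
    intro e y hy
    obtain ⟨hidem, heS⟩ := hε e.val e.2
    obtain ⟨j, hj⟩ := hcover y
    obtain ⟨hyeMe, hynu⟩ := hy
    have hysub : MsM y ⊆ MsM e.val := by
      obtain ⟨c, rfl⟩ := hyeMe
      exact htrans ⟨e.val * c, 1, by simp [mul_assoc]⟩
    have hle : j ≤ i := horder j i y e.val hj heS hysub
    refine ⟨j, lt_of_le_of_ne hle ?_, hj⟩
    intro hji
    subst hji
    -- then y is J-equivalent to e, so y ∈ unitSet e, contradiction
    obtain ⟨s₀, hs₀⟩ := hclass j
    rw [hs₀] at hj heS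
    have hMsMeq : MsM y = MsM e.val := hj.trans heS.symm
    have : e.val ∈ MsM y := hMsMeq ▸ hMsM_self e.val
    exact hynu (mem_unitSet_of_mem_MsM hidem hyeMe this)
  let Qf : ↑ε → Type _ := fun e => QfT k e.val
  let p : Submodule (MonoidAlgebra k M) ↑JiA := Submodule.comap JiA.subtype Jim1A
  -- N e ≤ JiA
  have hNle : ∀ e : ↥ε, NeS k e.val ≤ JiA := by
    intro e
    rw [Submodule.span_le, Set.singleton_subset_iff]
    exact (hJi _).mpr (Submodule.subset_span
      ⟨e.val, Set.mem_iUnion₂.mpr ⟨i, le_refl i, (hε e.val e.2).2⟩, rfl⟩)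
  -- span A (of '' Je e) ≤ Jim1A
  have hJeLe : ∀ e : ↥ε, Submodule.span (MonoidAlgebra k M)
      (⇑(MonoidAlgebra.of k M) '' Je e.val) ≤ Jim1A := by
    intro e
    rw [Submodule.span_le]
    rintro - ⟨y, hy, rfl⟩
    obtain ⟨j, hj, hyS⟩ := hJelow e y hy
    exact (hJim1 _).mpr (Submodule.subset_span ⟨y, Set.mem_iUnion₂.mpr ⟨j, hj, hyS⟩, rfl⟩)
  -- the maps
  let φ : ∀ e : ↥ε, ↥(NeS k e.val) →ₗ[MonoidAlgebra k M] (↥JiA ⧸ p) := fun e =>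
    p.mkQ ∘ₗ Submodule.inclusion (hNle e)
  have hkerφ : ∀ e : ↥ε, KeS k e.val ≤ LinearMap.ker (φ e) := by
    intro e x hx
    simp only [LinearMap.mem_ker, φ, LinearMap.comp_apply, Submodule.mkQ_apply,
      Submodule.Quotient.mk_eq_zero]
    show (Submodule.inclusion (hNle e) x).val ∈ Jim1A
    rw [Submodule.coe_inclusion]
    exact hJeLe e hx
  let ψ : ∀ e : ↥ε, QfT k e.val →ₗ[MonoidAlgebra k M] (↥JiA ⧸ p) := fun e => Submodule.liftQ _ (φ e) (hkerφ e)
  let Ψ : (⨁ e : ↥ε, Qf e) →ₗ[MonoidAlgebra k M] (↥JiA ⧸ p) := DirectSum.toModule (MonoidAlgebra k M) ↥ε _ ψ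
  have hΨmk : ∀ (e : ↥ε) (y : ↥(NeS k e.val)),
      Ψ (DirectSum.of Qf e (Submodule.Quotient.mk y)) =
        Submodule.Quotient.mk (⟨y.val, hNle e y.2⟩ : ↥JiA) := by
    intro e y
    rw [← DirectSum.lof_eq_of (MonoidAlgebra k M)]
    show (DirectSum.toModule (MonoidAlgebra k M) ↥ε _ ψ) (DirectSum.lof (MonoidAlgebra k M) ↥ε Qf e (Submodule.Quotient.mk y)) = _
    rw [DirectSum.toModule_lof]
    show φ e y = _
    simp only [φ, LinearMap.comp_apply, Submodule.mkQ_apply]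
    congr 1
  have hofNe : ∀ (e : ↥ε) (m : M), m ∈ Me e.val → MonoidAlgebra.of k M m ∈ NeS k e.val := by
    rintro e m ⟨a, rfl⟩
    exact Submodule.mem_span_singleton.mpr ⟨MonoidAlgebra.of k M a, by rw [smul_eq_mul, ← map_mul]⟩
  -- key consequence of regularity: elements `m*e` outside `S i` lie in `A · k(Je e)`
  have hC : ∀ (e : ↥ε) (m : M), m * e.val ∉ S i →
      MonoidAlgebra.of k M (m * e.val) ∈
        Submodule.span (MonoidAlgebra k M) (⇑(MonoidAlgebra.of k M) '' Je e.val) := by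
    intro e m hmS
    obtain ⟨hidem, heS⟩ := hε e.val e.2
    obtain ⟨t, ht⟩ := hreg (m * e.val)
    have hee2 : ∀ z : M, e.val * (e.val * z) = e.val * z := fun z => by
      rw [← mul_assoc, hidem]
    have hueMe : e.val * (t * m) * e.val ∈ eMe e.val := ⟨t * m, rfl⟩
    have hsu : (m * e.val) * (e.val * (t * m) * e.val) = m * e.val := by
      calc (m * e.val) * (e.val * (t * m) * e.val) = m * e.val * t * (m * e.val) := by
            simp only [mul_assoc, hee2]
        _ = m * e.val := ht
    have huJe : e.val * (t * m) * e.val ∈ Je e.val := by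
      refine ⟨hueMe, ?_⟩
      rintro ⟨-, v, hv, huv, hvu⟩
      have hescl : e.val ∈ MsM (m * e.val) := by
        refine ⟨v * e.val * t, 1, ?_⟩
        calc e.val = v * (e.val * (t * m) * e.val) := hvu.symm
          _ = v * e.val * t * (m * e.val) * 1 := by simp only [mul_assoc, mul_one]
      obtain ⟨j, hj⟩ := hcover (m * e.val)
      have h1 : i ≤ j := horder i j e.val (m * e.val) heS hj (htrans hescl)
      have h2 : j ≤ i := horder j i (m * e.val) e.val hj heS
        (htrans ⟨m, 1, by rw [mul_one]⟩)
      exact hmS (le_antisymm h2 h1 ▸ hj)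
    have heq : MonoidAlgebra.of k M (m * e.val) =
        MonoidAlgebra.of k M (m * e.val) • MonoidAlgebra.of k M (e.val * (t * m) * e.val) := by
      rw [smul_eq_mul, ← map_mul, hsu]
    rw [heq]
    exact Submodule.smul_mem _ _ (Submodule.subset_span ⟨_, huJe, rfl⟩)
  -- the inverse map on the k-basis
  let d : M → ⨁ e : ↥ε, Qf e := fun m =>
    if h : ∃ e : ↥ε, m ∈ Me e.val ∩ S i then
      DirectSum.of Qf h.choose (Submodule.Quotient.mk
        ⟨MonoidAlgebra.of k M m, hofNe h.choose m h.choose_spec.1⟩)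
    else 0
  let θ : MonoidAlgebra k M →ₗ[k] (⨁ e : ↥ε, Qf e) := Finsupp.linearCombination k d ∘ₗ (MonoidAlgebra.coeffLinearEquiv k).toLinearMap
  have hθof : ∀ m : M, θ (MonoidAlgebra.of k M m) = d m := by
    intro m
    show Finsupp.linearCombination k d (Finsupp.single m 1) = d m
    rw [Finsupp.linearCombination_single, one_smul]
  have hθkill : ∀ x ∈ Jim1A, θ x = 0 := by
    intro x hx
    rw [hJim1] at hx
    have hle : Submodule.span k
        (⇑(MonoidAlgebra.of k M) '' ⋃ (j : Fin n) (_ : j < i), S j) ≤ LinearMap.ker θ := by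
      rw [Submodule.span_le]
      rintro - ⟨s, hs, rfl⟩
      obtain ⟨j, hji, hsj⟩ := Set.mem_iUnion₂.mp hs
      rw [SetLike.mem_coe, LinearMap.mem_ker, hθof]
      refine dif_neg ?_
      rintro ⟨e', -, he'si⟩
      exact absurd (hclassu hsj he'si) (ne_of_lt hji)
    exact hle hx
  let θ' : ↥JiA →ₗ[k] (⨁ e : ↥ε, Qf e) :=
    { toFun := fun x => θ x.val
      map_add' := fun x y => by simp only [Submodule.coe_add, map_add]
      map_smul' := fun c x => by
        simp only [RingHom.id_apply, Submodule.coe_smul_of_tower, map_smul] }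
  have hθ'kill : Submodule.restrictScalars k p ≤ LinearMap.ker θ' := by
    intro x hx
    rw [Submodule.restrictScalars_mem] at hx
    exact hθkill x.val hx
  let Θ : (↥JiA ⧸ p) →ₗ[k] (⨁ e : ↥ε, Qf e) :=
    (Submodule.liftQ _ θ' hθ'kill) ∘ₗ
      (Submodule.Quotient.restrictScalarsEquiv k p).symm.toLinearMap
  have hΘmk : ∀ x : ↥JiA, Θ (Submodule.Quotient.mk x) = θ x.val := by
    intro x
    show Submodule.liftQ _ θ' hθ'kill
      ((Submodule.Quotient.restrictScalarsEquiv k p).symm (Submodule.Quotient.mk x)) = _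
    rw [Submodule.Quotient.restrictScalarsEquiv_symm_mk, Submodule.liftQ_apply]
    rfl
  have hNe_mem : ∀ (e : ↥ε) (b : MonoidAlgebra k M),
      b * MonoidAlgebra.of k M e.val ∈ NeS k e.val := fun e b =>
    Submodule.mem_span_singleton.mpr ⟨b, by rw [smul_eq_mul]⟩
  have hdpos : ∀ (m : M) (h : ∃ e : ↥ε, m ∈ Me e.val ∩ S i),
      d m = DirectSum.of Qf h.choose (Submodule.Quotient.mk
        ⟨MonoidAlgebra.of k M m, hofNe h.choose m h.choose_spec.1⟩) := fun m h => dif_pos h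
  have hdneg : ∀ (m : M), ¬(∃ e : ↥ε, m ∈ Me e.val ∩ S i) → d m = 0 := fun m h => dif_neg h
  have hcongr : ∀ (e₁ e₂ : ↥ε) (heq : e₁ = e₂) (x : MonoidAlgebra k M)
      (h₁ : x ∈ NeS k e₁.val) (h₂ : x ∈ NeS k e₂.val),
      DirectSum.of Qf e₁ (Submodule.Quotient.mk ⟨x, h₁⟩) =
        DirectSum.of Qf e₂ (Submodule.Quotient.mk ⟨x, h₂⟩) := by
    rintro e₁ e₂ rfl x h₁ h₂; rfl
  have key : ∀ (e : ↥ε) (m : M) (h : MonoidAlgebra.of k M (m * e.val) ∈ NeS k e.val),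
      Θ (Ψ (DirectSum.of Qf e (Submodule.Quotient.mk ⟨MonoidAlgebra.of k M (m * e.val), h⟩))) =
        DirectSum.of Qf e (Submodule.Quotient.mk ⟨MonoidAlgebra.of k M (m * e.val), h⟩) := by
    intro e m h
    rw [hΨmk, hΘmk]
    show θ (MonoidAlgebra.of k M (m * e.val)) = _
    rw [hθof]
    by_cases hSi : m * e.val ∈ S i
    · have hex : ∃ e' : ↥ε, m * e.val ∈ Me e'.val ∩ S i := ⟨e, ⟨m, rfl⟩, hSi⟩
      have hchoose : hex.choose = e := by
        by_contra hne
        have hd := hdisjε hex.choose.2 e.2 (fun hc => hne (Subtype.ext hc))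
        exact Set.disjoint_left.mp hd hex.choose_spec ⟨⟨m, rfl⟩, hSi⟩
      rw [hdpos _ hex]
      exact hcongr _ _ hchoose _ _ _
    · rw [hdneg _ (by rintro ⟨e', -, hsi⟩; exact hSi hsi)]
      have hz : (Submodule.Quotient.mk ⟨MonoidAlgebra.of k M (m * e.val), h⟩ : Qf e) = 0 :=
        (Submodule.Quotient.mk_eq_zero _).mpr (Submodule.mem_comap.mpr (hC e m hSi))
      rw [hz, map_zero]
  have hcomp : ∀ (e : ↥ε) (q : Qf e), Θ (Ψ (DirectSum.of Qf e q)) = DirectSum.of Qf e q := by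
    intro e q
    obtain ⟨y, rfl⟩ := Submodule.Quotient.mk_surjective _ q
    obtain ⟨b, hb⟩ := Submodule.mem_span_singleton.mp y.2
    have hy : y = ⟨b * MonoidAlgebra.of k M e.val, hNe_mem e b⟩ :=
      Subtype.ext (by rw [← hb, smul_eq_mul])
    rw [hy]
    clear hy hb
    induction b using MonoidAlgebra.induction_on with
    | of m =>
      have h1 : (⟨MonoidAlgebra.of k M m * MonoidAlgebra.of k M e.val, hNe_mem e _⟩ :
          ↥(NeS k e.val)) = ⟨MonoidAlgebra.of k M (m * e.val),
            by rw [map_mul]; exact hNe_mem e _⟩ :=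
        Subtype.ext ((map_mul (MonoidAlgebra.of k M) m e.val).symm)
      rw [h1]
      exact key e m _
    | add f g hf hg =>
      have h1 : (⟨(f + g) * MonoidAlgebra.of k M e.val, hNe_mem e _⟩ : ↥(NeS k e.val)) =
          ⟨f * MonoidAlgebra.of k M e.val, hNe_mem e f⟩ +
            ⟨g * MonoidAlgebra.of k M e.val, hNe_mem e g⟩ :=
        Subtype.ext (show (f + g) * MonoidAlgebra.of k M e.val = _ + _ from add_mul f g _)
      rw [h1, Submodule.Quotient.mk_add, map_add, map_add, map_add, hf, hg]
    | smul r f hf =>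
      have h1 : (⟨(r • f) * MonoidAlgebra.of k M e.val, hNe_mem e _⟩ : ↥(NeS k e.val)) =
          r • ⟨f * MonoidAlgebra.of k M e.val, hNe_mem e f⟩ :=
        Subtype.ext (show (r • f) * MonoidAlgebra.of k M e.val =
          r • (f * MonoidAlgebra.of k M e.val) from smul_mul_assoc r f _)
      rw [h1, Submodule.Quotient.mk_smul, ← DirectSum.lof_eq_of k, map_smul,
        DirectSum.lof_eq_of k, LinearMap.map_smul_of_tower, LinearMap.map_smul_of_tower, hf]
  have hinj : Function.Injective Ψ := by
    have hid : ∀ x : ⨁ e : ↥ε, Qf e, Θ (Ψ x) = x := by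
      intro x
      refine DirectSum.induction_on x ?_ ?_ ?_
      · rw [map_zero, map_zero]
      · exact hcomp
      · intro a b ha hb
        rw [map_add, map_add, ha, hb]
    intro a b hab
    rw [← hid a, ← hid b, hab]
  have hsurj : Function.Surjective Ψ := by
    intro z
    obtain ⟨x, rfl⟩ := Submodule.Quotient.mk_surjective p z
    have main : ∀ (y : MonoidAlgebra k M), y ∈ Submodule.span k
        (⇑(MonoidAlgebra.of k M) '' ⋃ (j : Fin n) (_ : j ≤ i), S j) →
        ∀ (h : y ∈ JiA), Submodule.Quotient.mk (⟨y, h⟩ : ↥JiA) ∈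
        Submodule.restrictScalars k (LinearMap.range Ψ) := by
      intro y hy
      induction hy using Submodule.span_induction with
      | mem a ha =>
        obtain ⟨s, hs, rfl⟩ := ha
        obtain ⟨j, hj, hsj⟩ := Set.mem_iUnion₂.mp hs
        by_cases hSi : s ∈ S i
        · have h2 : s ∈ ⋃ e ∈ ε, Me e ∩ S i := hunion.symm ▸ hSi
          obtain ⟨e, he, hme⟩ := Set.mem_iUnion₂.mp h2
          intro h
          rw [Submodule.restrictScalars_mem]
          exact ⟨DirectSum.of Qf ⟨e, he⟩ (Submodule.Quotient.mk
            ⟨MonoidAlgebra.of k M s, hofNe ⟨e, he⟩ s hme.1⟩), hΨmk _ _⟩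
        · intro h
          have hji : j ≠ i := fun hc => hSi (hc ▸ hsj)
          have hmem : (⟨MonoidAlgebra.of k M s, h⟩ : ↥JiA) ∈ p := by
            show MonoidAlgebra.of k M s ∈ Jim1A
            exact (hJim1 _).mpr (Submodule.subset_span
              ⟨s, Set.mem_iUnion₂.mpr ⟨j, lt_of_le_of_ne hj hji, hsj⟩, rfl⟩)
          rw [(Submodule.Quotient.mk_eq_zero p).mpr hmem]
          exact zero_mem _
      | zero =>
        intro h
        have h0 : (⟨(0 : MonoidAlgebra k M), h⟩ : ↥JiA) = 0 := rfl
        rw [h0, Submodule.Quotient.mk_zero]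
        exact zero_mem _
      | add a b ha hb iha ihb =>
        intro h
        have h1 : a ∈ JiA := (hJi a).mpr ha
        have h2 : b ∈ JiA := (hJi b).mpr hb
        have h3 : (⟨a + b, h⟩ : ↥JiA) = ⟨a, h1⟩ + ⟨b, h2⟩ := rfl
        rw [h3, Submodule.Quotient.mk_add]
        exact add_mem (iha h1) (ihb h2)
      | smul c a ha iha =>
        intro h
        have h1 : a ∈ JiA := (hJi a).mpr ha
        have h3 : (⟨c • a, h⟩ : ↥JiA) = c • (⟨a, h1⟩ : ↥JiA) := rfl
        rw [h3, Submodule.Quotient.mk_smul]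
        exact Submodule.smul_mem _ c (iha h1)
    have hfin := main x.val ((hJi _).mp x.2) x.2
    rw [Submodule.restrictScalars_mem] at hfin
    obtain ⟨w, hw⟩ := hfin
    exact ⟨w, hw⟩
  have hbij : Function.Bijective Ψ := ⟨hinj, hsurj⟩
  exact ⟨(LinearEquiv.ofBijective Ψ hbij).symm⟩

/-- A `k`-span of monoid elements closed under left multiplication by `M`, as an
`A`-submodule of `A = MonoidAlgebra k M`. -/
def idealSpan (k : Type*) [Field k] {M : Type*} [Monoid M] (U : Set M)
    (hU : ∀ m : M, ∀ s ∈ U, m * s ∈ U) :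
    Submodule (MonoidAlgebra k M) (MonoidAlgebra k M) where
  carrier := Submodule.span k (⇑(MonoidAlgebra.of k M) '' U)
  zero_mem' := Submodule.zero_mem _
  add_mem' := fun h1 h2 => Submodule.add_mem _ h1 h2
  smul_mem' := by
    intro c x hx
    simp only [SetLike.mem_coe] at hx ⊢
    rw [smul_eq_mul]
    induction hx using Submodule.span_induction with
    | mem y hy =>
      obtain ⟨s, hs, rfl⟩ := hy
      induction c using MonoidAlgebra.induction_on with
      | of m =>
        rw [← map_mul]
        exact Submodule.subset_span ⟨m * s, hU m s hs, rfl⟩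
      | add f g hf hg => rw [add_mul]; exact Submodule.add_mem _ hf hg
      | smul r f hf => rw [smul_mul_assoc]; exact Submodule.smul_mem _ _ hf
    | zero => rw [mul_zero]; exact Submodule.zero_mem _
    | add y z _ _ hy hz => rw [mul_add]; exact Submodule.add_mem _ hy hz
    | smul a y _ hy => rw [mul_smul_comm]; exact Submodule.smul_mem _ _ hy

lemma idealSpan_coe (k : Type*) [Field k] {M : Type*} [Monoid M] (U : Set M)
    (hU : ∀ m : M, ∀ s ∈ U, m * s ∈ U) :
    (idealSpan k U hU : Set (MonoidAlgebra k M)) =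
      (Submodule.span k (⇑(MonoidAlgebra.of k M) '' U) : Set (MonoidAlgebra k M)) := rfl

lemma mem_idealSpan (k : Type*) [Field k] {M : Type*} [Monoid M] (U : Set M)
    (hU : ∀ m : M, ∀ s ∈ U, m * s ∈ U) (x : MonoidAlgebra k M) :
    x ∈ idealSpan k U hU ↔ x ∈ Submodule.span k (⇑(MonoidAlgebra.of k M) '' U) := Iff.rfl

lemma of_mem_idealSpan (k : Type*) [Field k] {M : Type*} [Monoid M] {U : Set M}
    (hU : ∀ m : M, ∀ s ∈ U, m * s ∈ U) {s : M} (hs : s ∈ U) :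
    MonoidAlgebra.of k M s ∈ idealSpan k U hU :=
  Submodule.subset_span ⟨s, hs, rfl⟩

/-- Let `M` be a finite regular monoid, `k` a field, and
`A := MonoidAlgebra k M`.  Let `S_1, ..., S_n` be the `J`-classes of `M`, enumerated so
that `M·s·M ⊆ M·t·M` for `s ∈ S_i`, `t ∈ S_j` implies `i ≤ j`; let `J_i` be the
`k`-linear span of `S_1 ∪ ... ∪ S_i` (and `J_0 := 0`).  Fix `i` and let `ε` be a set of
idempotents of `M`, all lying in `S_i`, such that the sets `(Me) ∩ S_i` for `e ∈ ε` are
pairwise disjoint with union `S_i`.  Then, as left `A`-modules,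
`J_i/J_{i-1} ≅ ⊕_{e ∈ ε} (A·e)/(A·kJ_e)`. -/
theorem statement16 {M : Type*} [Monoid M] [Finite M]
    (hreg : ∀ s : M, ∃ t : M, s * t * s = s)
    {k : Type*} [Field k]
    {n : ℕ} (S : Fin n → Set M)
    (hclass : ∀ i, ∃ s : M, S i = JClass s)
    (hcover : ∀ s : M, ∃ i, s ∈ S i)
    (hdisj : ∀ i j, i ≠ j → Disjoint (S i) (S j))
    (horder : ∀ (i j : Fin n) (s t : M), s ∈ S i → t ∈ S j → MsM s ⊆ MsM t → i ≤ j)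
    (i : Fin n) (ε : Set M)
    (hε : ∀ e ∈ ε, e * e = e ∧ e ∈ S i)
    (hdisjε : ε.PairwiseDisjoint fun e => Me e ∩ S i)
    (hunion : (⋃ e ∈ ε, Me e ∩ S i) = S i) :
    ∃ JiA Jim1A : Submodule (MonoidAlgebra k M) (MonoidAlgebra k M),
      (JiA : Set (MonoidAlgebra k M)) =
        (Submodule.span k (⇑(MonoidAlgebra.of k M) '' ⋃ (j : Fin n) (_ : j ≤ i), S j) :
          Set (MonoidAlgebra k M)) ∧
      (Jim1A : Set (MonoidAlgebra k M)) =
        (Submodule.span k (⇑(MonoidAlgebra.of k M) '' ⋃ (j : Fin n) (_ : j < i), S j) :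
          Set (MonoidAlgebra k M)) ∧
      Nonempty
        ((↥JiA ⧸ Submodule.comap JiA.subtype Jim1A) ≃ₗ[MonoidAlgebra k M]
          (⨁ e : ↥ε,
            ↥(Submodule.span (MonoidAlgebra k M) {MonoidAlgebra.of k M e.val}) ⧸
              Submodule.comap
                (Submodule.span (MonoidAlgebra k M) {MonoidAlgebra.of k M e.val}).subtype
                (Submodule.span (MonoidAlgebra k M)
                  (⇑(MonoidAlgebra.of k M) '' Je e.val)))) := by
  have hclosed : ∀ (P : Fin n → Prop), (∀ a b : Fin n, a ≤ b → P b → P a) →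
      ∀ (m s : M), s ∈ (⋃ (j : Fin n) (_ : P j), S j) →
        m * s ∈ (⋃ (j : Fin n) (_ : P j), S j) := by
    intro P hP m s hs
    obtain ⟨j, hPj, hsj⟩ := Set.mem_iUnion₂.mp hs
    obtain ⟨j', hj'⟩ := hcover (m * s)
    have hle : j' ≤ j := horder j' j (m * s) s hj' hsj (by
      rintro x ⟨a, b, rfl⟩
      exact ⟨a * m, b, by rw [mul_assoc a m s]⟩)
    exact Set.mem_iUnion₂.mpr ⟨j', hP j' j hle hPj, hj'⟩
  refine ⟨idealSpan k _ (hclosed (fun j => j ≤ i) (fun a b hab hb => le_trans hab hb)),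
    idealSpan k _ (hclosed (fun j => j < i) (fun a b hab hb => lt_of_le_of_lt hab hb)),
    rfl, rfl, ?_⟩
  exact mainEquiv hreg hclass hcover hdisj horder i ε hε hdisjε hunion _ _
    (fun x => Iff.rfl) (fun x => Iff.rfl)
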